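/- Let φ₁(r) := r/√(1+r²) and f₀(r) := (1+r²)^{3/2} log(r + √(1+r²))/r - (1+r²)/2. Then for every r > 0, (d/dr)(r φ₁'(r) f₀(r)) = ½ r² φ₁'(r) + φ₁(r)/(2r). Equivalently, with h ≡ 1/2 and f = f₀, the quantity E(r) = ½ r φ₁'(r) + h φ₁(r)/r² - (r φ₁'(r) f₀(r))'/r vanishes identically on (0,∞). -/

import Mathlib

noncomputable section

/-- The profile `φ₁(r) = r/√(1+r²)`. -/
def phi1 (r : ℝ) : ℝ := r / Real.sqrt (1 + r ^ 2)

/-- The coefficient function `f₀(r) = (1+r²)^{3/2} log(r + √(1+r²))/r - (1+r²)/2`. -/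
def f0 (r : ℝ) : ℝ :=
  (1 + r ^ 2) ^ ((3:ℝ)/2) * Real.log (r + Real.sqrt (1 + r ^ 2)) / r - (1 + r ^ 2) / 2

lemma phi1_hasDerivAt (s : ℝ) :
    HasDerivAt phi1 (1 / ((1 + s ^ 2) * Real.sqrt (1 + s ^ 2))) s := by
  have h1 : (0:ℝ) < 1 + s ^ 2 := by positivity
  have hs : 0 < Real.sqrt (1 + s ^ 2) := Real.sqrt_pos.mpr h1
  have hinner : HasDerivAt (fun x : ℝ => 1 + x ^ 2) (2 * s) s := by
    simpa using (hasDerivAt_pow 2 s).const_add 1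
  have hsqrt : HasDerivAt (fun x : ℝ => Real.sqrt (1 + x ^ 2))
      (1 / (2 * Real.sqrt (1 + s ^ 2)) * (2 * s)) s :=
    (Real.hasDerivAt_sqrt h1.ne').comp s hinner
  have hdiv : HasDerivAt phi1 _ s := (hasDerivAt_id s).div hsqrt hs.ne'
  have hsq : Real.sqrt (1 + s ^ 2) ^ 2 = 1 + s ^ 2 := Real.sq_sqrt h1.le
  convert hdiv using 1
  simp only [id]
  field_simp
  linear_combination (-s ^ 2) * hsq

lemma deriv_phi1 (s : ℝ) :
    deriv phi1 s = 1 / ((1 + s ^ 2) * Real.sqrt (1 + s ^ 2)) :=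
  (phi1_hasDerivAt s).deriv

lemma key_eq (s : ℝ) (hs : 0 < s) :
    s * deriv phi1 s * f0 s = Real.arsinh s - phi1 s / 2 := by
  have h1 : (0:ℝ) < 1 + s ^ 2 := by positivity
  have ht : 0 < Real.sqrt (1 + s ^ 2) := Real.sqrt_pos.mpr h1
  have hsq : Real.sqrt (1 + s ^ 2) ^ 2 = 1 + s ^ 2 := Real.sq_sqrt h1.le
  have hpow : (1 + s ^ 2) ^ ((3:ℝ)/2) = Real.sqrt (1 + s ^ 2) ^ 3 := by
    rw [Real.sqrt_eq_rpow, ← Real.rpow_natCast ((1 + s ^ 2) ^ ((1:ℝ)/2)) 3,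
      ← Real.rpow_mul h1.le]
    norm_num
  rw [deriv_phi1, f0, phi1, Real.arsinh, hpow]
  field_simp
  linear_combination (2 * Real.sqrt (1 + s ^ 2) * Real.log (s + Real.sqrt (1 + s ^ 2))) * hsq

/-- **`f₀` solves the radial ODE `E = 0` for the profile `φ₁` with `h ≡ 1/2`.**
For every `r > 0`, `(r φ₁'(r) f₀(r))' = ½ r² φ₁'(r) + φ₁(r)/(2r)`; equivalently, the radial
error `E(r) = ½ r φ₁' + (1/2) φ₁/r² - (r φ₁' f₀)'/r` vanishes identically on `(0,∞)`. -/
theorem f0_solves_radial_ode :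
    ∀ r : ℝ, 0 < r →
      deriv (fun s => s * deriv phi1 s * f0 s) r =
          (1 / 2) * r ^ 2 * deriv phi1 r + phi1 r / (2 * r) ∧
      (1 / 2) * r * deriv phi1 r + (1 / 2) * phi1 r / r ^ 2 -
          deriv (fun s => s * deriv phi1 s * f0 s) r / r = 0 := by
  intro r hr
  have h1 : (0:ℝ) < 1 + r ^ 2 := by positivity
  have ht : 0 < Real.sqrt (1 + r ^ 2) := Real.sqrt_pos.mpr h1
  have hsq : Real.sqrt (1 + r ^ 2) ^ 2 = 1 + r ^ 2 := Real.sq_sqrt h1.le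
  have heq : (fun s => s * deriv phi1 s * f0 s) =ᶠ[nhds r]
      (fun s => Real.arsinh s - phi1 s / 2) := by
    filter_upwards [eventually_gt_nhds hr] with s hs using key_eq s hs
  have hD : HasDerivAt (fun s => Real.arsinh s - phi1 s / 2)
      ((Real.sqrt (1 + r ^ 2))⁻¹ - (1 / ((1 + r ^ 2) * Real.sqrt (1 + r ^ 2))) / 2) r :=
    (Real.hasDerivAt_arsinh r).sub ((phi1_hasDerivAt r).div_const 2)
  have hmain : deriv (fun s => s * deriv phi1 s * f0 s) r =
      (1 / 2) * r ^ 2 * deriv phi1 r + phi1 r / (2 * r) := by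
    rw [heq.deriv_eq, hD.deriv, deriv_phi1, phi1]
    field_simp
    nlinarith [hsq, ht]
  refine ⟨hmain, ?_⟩
  rw [hmain, deriv_phi1, phi1]
  field_simp
  nlinarith [hsq, ht, mul_pos hr ht]
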